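/- Let (x_i, v_i)_{i=1}^N be a C¹ solution of the closed-loop flocking-with-steering system on [0,∞). If ∫₀^∞ d_β(t) dt < ∞, then the quantity ᾱ = inf over all i and all t ≥ 0 of α_i(t) = ξ_i(v̄_i(t) − v_i(t)) is strictly positive. -/

import Mathlib

open MeasureTheory Set Filter

/-- Diameter (maximum pairwise distance) of a finite family of trajectories at time `t`. -/
noncomputable def pairDiam {N d : ℕ} (f : Fin N → ℝ → EuclideanSpace ℝ (Fin d)) (t : ℝ) : ℝ :=
  ⨆ p : Fin N × Fin N, ‖f p.1 t - f p.2 t‖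

/-- Closed-loop influence coefficient `a_{ij}(t) = φ_{ij}(x(t); σ_i(v_i(t)))`. -/
noncomputable def aCL {N d : ℕ}
    (φ : Fin N → Fin N → (Fin N → EuclideanSpace ℝ (Fin d)) → EuclideanSpace ℝ (Fin d) → ℝ)
    (σ : Fin N → EuclideanSpace ℝ (Fin d) → EuclideanSpace ℝ (Fin d))
    (x v : Fin N → ℝ → EuclideanSpace ℝ (Fin d)) (i j : Fin N) (t : ℝ) : ℝ :=
  φ i j (fun k => x k t) (σ i (v i t))

/-- Closed-loop averaged velocity `v̄_i(t) = ∑ j a_{ij}(t) v_j(t)`. -/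
noncomputable def vbarCL {N d : ℕ}
    (φ : Fin N → Fin N → (Fin N → EuclideanSpace ℝ (Fin d)) → EuclideanSpace ℝ (Fin d) → ℝ)
    (σ : Fin N → EuclideanSpace ℝ (Fin d) → EuclideanSpace ℝ (Fin d))
    (x v : Fin N → ℝ → EuclideanSpace ℝ (Fin d)) (i : Fin N) (t : ℝ) :
    EuclideanSpace ℝ (Fin d) :=
  ∑ j, aCL φ σ x v i j t • v j t

/-- Closed-loop gain `α_i(t) = ξ_i(v̄_i(t) - v_i(t))`. -/
noncomputable def alphaCL {N d : ℕ}
    (φ : Fin N → Fin N → (Fin N → EuclideanSpace ℝ (Fin d)) → EuclideanSpace ℝ (Fin d) → ℝ)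
    (σ : Fin N → EuclideanSpace ℝ (Fin d) → EuclideanSpace ℝ (Fin d))
    (ξ : Fin N → EuclideanSpace ℝ (Fin d) → ℝ)
    (x v : Fin N → ℝ → EuclideanSpace ℝ (Fin d)) (i : Fin N) (t : ℝ) : ℝ :=
  ξ i (vbarCL φ σ x v i t - v i t)

local notation "⟪" x ", " y "⟫" => @inner ℝ _ _ x y

/-- Continuity of a finite `sup'` of continuous functions. -/
theorem flockAux_continuousOn_finset_sup' {ι : Type*} (s : Finset ι) (hs : s.Nonempty)
    (S : Set ℝ) (g : ι → ℝ → ℝ) (hg : ∀ i ∈ s, ContinuousOn (g i) S) :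
    ContinuousOn (fun t => s.sup' hs fun i => g i t) S := by
  induction hs using Finset.Nonempty.cons_induction with
  | singleton a => simpa using hg a (by simp)
  | cons a s ha hs ih =>
      have : (fun t => (Finset.cons a s ha).sup' (Finset.cons_nonempty ha) fun i => g i t)
          = fun t => (g a t) ⊔ (s.sup' hs fun i => g i t) := by
        funext t; rw [Finset.sup'_cons hs]
      rw [this]
      exact (hg a (by simp)).sup (ih fun i hi => hg i (by simp [hi]))

/-- Derivative of the norm of a nonvanishing differentiable curve. -/
theorem flockAux_norm_hasDerivWithinAt {E : Type*} [NormedAddCommGroup E]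
    [InnerProductSpace ℝ E] (g : ℝ → E) (g' : E) (s : Set ℝ) (t0 : ℝ)
    (hg : HasDerivWithinAt g g' s t0) (hne : g t0 ≠ 0) :
    HasDerivWithinAt (fun z => ‖g z‖) (⟪g t0, g'⟫ / ‖g t0‖) s t0 := by
  have hin : HasDerivWithinAt (fun z => ⟪g z, g z⟫) (⟪g t0, g'⟫ + ⟪g', g t0⟫) s t0 :=
    hg.inner ℝ hg
  have hnpos : (0:ℝ) < ‖g t0‖ := norm_pos_iff.2 hne
  have hpos : (0:ℝ) < ⟪g t0, g t0⟫ := by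
    rw [real_inner_self_eq_norm_mul_norm]; positivity
  have hsq : HasDerivAt Real.sqrt (1 / (2 * Real.sqrt ⟪g t0, g t0⟫)) ⟪g t0, g t0⟫ :=
    Real.hasDerivAt_sqrt hpos.ne'
  have hcomp := hsq.comp_hasDerivWithinAt t0 hin
  have heq : Real.sqrt ∘ (fun z => ⟪g z, g z⟫) = fun z => ‖g z‖ := by
    funext z
    simp only [Function.comp_apply]
    rw [real_inner_self_eq_norm_mul_norm, Real.sqrt_mul_self (norm_nonneg _)]
  rw [heq] at hcomp
  refine hcomp.congr_deriv ?_
  rw [real_inner_comm g' (g t0)]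
  have hnorm : Real.sqrt ⟪g t0, g t0⟫ = ‖g t0‖ := by
    rw [real_inner_self_eq_norm_mul_norm, Real.sqrt_mul_self (norm_nonneg _)]
  rw [hnorm]
  field_simp
  ring

/-- For a `C¹` solution of the closed-loop flocking-with-steering system on
`[0,∞)`, if `∫₀^∞ d_β(t) dt < ∞` then `ᾱ = inf_{i, t ≥ 0} α_i(t) > 0`. -/
theorem closed_loop_gain_infimum_positive
    (N d : ℕ) (hN : 2 ≤ N)
    (φ : Fin N → Fin N → (Fin N → EuclideanSpace ℝ (Fin d)) → EuclideanSpace ℝ (Fin d) → ℝ)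
    (σ : Fin N → EuclideanSpace ℝ (Fin d) → EuclideanSpace ℝ (Fin d))
    (ξ : Fin N → EuclideanSpace ℝ (Fin d) → ℝ)
    (x v β : Fin N → ℝ → EuclideanSpace ℝ (Fin d))
    (hφ_smooth : ∀ i j, ContDiff ℝ 1
      (fun p : (Fin N → EuclideanSpace ℝ (Fin d)) × EuclideanSpace ℝ (Fin d) => φ i j p.1 p.2))
    (hφ_pos : ∀ i j X u, 0 < φ i j X u)
    (hφ_sum : ∀ i X u, ∑ j, φ i j X u = 1)
    (hφ_shift : ∀ i j X (y : EuclideanSpace ℝ (Fin d)) u, φ i j (fun k => X k + y) u = φ i j X u)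
    (hσ_smooth : ∀ i, ContDiff ℝ 1 (σ i))
    (hσ_ball : ∀ i u, ‖σ i u‖ ≤ 1)
    (hξ_smooth : ∀ i, ContDiff ℝ 1 (ξ i))
    (hξ_pos : ∀ i u, 0 < ξ i u)
    (hξ_bound : ∃ A > 0, ∀ i (u : EuclideanSpace ℝ (Fin d)), u ≠ 0 → ξ i u ≤ A / ‖u‖)
    (hβ_cont : ∀ i, ContinuousOn (β i) (Ici 0))
    (hx : ∀ i, ∀ t ∈ Ici (0:ℝ), HasDerivWithinAt (x i) (v i t) (Ici 0) t)
    (hv : ∀ i, ∀ t ∈ Ici (0:ℝ),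
      HasDerivWithinAt (v i)
        (alphaCL φ σ ξ x v i t • (vbarCL φ σ x v i t - v i t) + β i t) (Ici 0) t)
    (hβ_int : ∫⁻ t in Ici (0:ℝ), ENNReal.ofReal (pairDiam β t) < ⊤) :
    0 < ⨅ p : Fin N × (Ici (0:ℝ)), alphaCL φ σ ξ x v p.1 (p.2 : ℝ) := by
  classical
  obtain ⟨A, hApos, hξA⟩ := hξ_bound
  haveI : NeZero N := ⟨by omega⟩
  have i0 : Fin N := ⟨0, by omega⟩
  haveI : Nonempty (Fin N) := ⟨i0⟩
  have HU : (Finset.univ : Finset (Fin N × Fin N)).Nonempty := Finset.univ_nonempty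
  -- sup' representation of pairDiam
  have hpd : ∀ (f : Fin N → ℝ → EuclideanSpace ℝ (Fin d)) (t : ℝ),
      pairDiam f t = Finset.univ.sup' HU (fun p => ‖f p.1 t - f p.2 t‖) := by
    intro f t
    rw [pairDiam, ← Finset.sup'_univ_eq_ciSup]
  have hpd_le : ∀ (f : Fin N → ℝ → EuclideanSpace ℝ (Fin d)) (t : ℝ) (p q : Fin N),
      ‖f p t - f q t‖ ≤ pairDiam f t := by
    intro f t p q
    rw [hpd]
    exact Finset.le_sup' (f := fun p : Fin N × Fin N => ‖f p.1 t - f p.2 t‖)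
      (Finset.mem_univ (p, q))
  have hpd_nonneg : ∀ (f : Fin N → ℝ → EuclideanSpace ℝ (Fin d)) (t : ℝ), 0 ≤ pairDiam f t := by
    intro f t
    have := hpd_le f t i0 i0
    simpa using this
  -- continuity of velocities and diameters
  have hvc : ∀ i, ContinuousOn (v i) (Ici 0) := fun i t ht => (hv i t ht).continuousWithinAt
  have hdv_cont : ContinuousOn (fun t => pairDiam v t) (Ici 0) := by
    refine ContinuousOn.congr (flockAux_continuousOn_finset_sup' Finset.univ HU (Ici 0)
      (fun p t => ‖v p.1 t - v p.2 t‖) (fun p _ => ((hvc p.1).sub (hvc p.2)).norm)) ?_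
    intro t _; exact hpd v t
  have hdb_cont : ContinuousOn (fun t => pairDiam β t) (Ici 0) := by
    refine ContinuousOn.congr (flockAux_continuousOn_finset_sup' Finset.univ HU (Ici 0)
      (fun p t => ‖β p.1 t - β p.2 t‖) (fun p _ => ((hβ_cont p.1).sub (hβ_cont p.2)).norm)) ?_
    intro t _; exact hpd β t
  -- globally continuous extension of the β-diameter
  set hfun : ℝ → ℝ := fun s => pairDiam β (max s 0) with hfun_def
  have hfun_cont : Continuous hfun := by
    apply hdb_cont.comp_continuous (continuous_id.max continuous_const)
    intro u; exact le_max_right u 0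
  have hfun_eq : ∀ s : ℝ, 0 ≤ s → hfun s = pairDiam β s := by
    intro s hs; simp only [hfun_def, max_eq_left hs]
  have hfun_nonneg : ∀ s : ℝ, 0 ≤ hfun s := fun s => hpd_nonneg β _
  -- the closed-loop vector field
  set W : Fin N → ℝ → EuclideanSpace ℝ (Fin d) :=
    fun i s => alphaCL φ σ ξ x v i s • (vbarCL φ σ x v i s - v i s) + β i s with hW_def
  have hW : ∀ i, ∀ s ∈ Ici (0:ℝ), HasDerivWithinAt (v i) (W i s) (Ici 0) s := fun i s hs =>
    hv i s hs
  -- sum of weights is 1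
  have hsum1 : ∀ (i : Fin N) (s : ℝ), ∑ k, aCL φ σ x v i k s = 1 := by
    intro i s
    simpa [aCL] using hφ_sum i (fun k => x k s) (σ i (v i s))
  -- rewriting v̄_i - v_i as a convex combination of differences
  have hu_rw : ∀ (i : Fin N) (s : ℝ),
      vbarCL φ σ x v i s - v i s = ∑ k, aCL φ σ x v i k s • (v k s - v i s) := by
    intro i s
    have h : ∑ k, aCL φ σ x v i k s • (v k s - v i s)
        = (∑ k, aCL φ σ x v i k s • v k s) - (∑ k, aCL φ σ x v i k s) • v i s := by
      rw [Finset.sum_smul, ← Finset.sum_sub_distrib]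
      simp [smul_sub]
    rw [h, hsum1, one_smul, vbarCL]
  -- the steering term is bounded by A
  have hAu : ∀ (i : Fin N) (s : ℝ),
      ‖alphaCL φ σ ξ x v i s • (vbarCL φ σ x v i s - v i s)‖ ≤ A := by
    intro i s
    set u := vbarCL φ σ x v i s - v i s with hu
    have hα : alphaCL φ σ ξ x v i s = ξ i u := rfl
    rw [hα, norm_smul, Real.norm_eq_abs, abs_of_pos (hξ_pos i u)]
    by_cases h0 : u = 0
    · simp [h0]
      exact hApos.le
    · calc ξ i u * ‖u‖ ≤ (A / ‖u‖) * ‖u‖ :=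
          mul_le_mul_of_nonneg_right (hξA i u h0) (norm_nonneg _)
        _ = A := div_mul_cancel₀ A (norm_ne_zero_iff.2 h0)
  -- crude bound on the difference of vector fields
  have hWd : ∀ (p q : Fin N) (s : ℝ), 0 ≤ s → ‖W p s - W q s‖ ≤ 2 * A + pairDiam β s := by
    intro p q s hs
    have h1 := hAu p s
    have h2 := hAu q s
    have h3 : ‖β p s - β q s‖ ≤ pairDiam β s := hpd_le β s p q
    have hsplit : W p s - W q s =
        (alphaCL φ σ ξ x v p s • (vbarCL φ σ x v p s - v p s)
          - alphaCL φ σ ξ x v q s • (vbarCL φ σ x v q s - v q s)) + (β p s - β q s) := by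
      simp only [hW_def]; abel
    rw [hsplit]
    have := norm_add_le (alphaCL φ σ ξ x v p s • (vbarCL φ σ x v p s - v p s)
      - alphaCL φ σ ξ x v q s • (vbarCL φ σ x v q s - v q s)) (β p s - β q s)
    have h4 := norm_sub_le (alphaCL φ σ ξ x v p s • (vbarCL φ σ x v p s - v p s))
      (alphaCL φ σ ξ x v q s • (vbarCL φ σ x v q s - v q s))
    linarith
  -- the fundamental comparison estimate
  have key : ∀ T : ℝ, 0 ≤ T → ∀ ε : ℝ, 0 < ε → ∀ t ∈ Icc (0:ℝ) T,
      pairDiam v t ≤ pairDiam v 0 + ε + ε * t + ∫ s in (0:ℝ)..t, hfun s := by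
    intro T hT ε hε
    set Bf : ℝ → ℝ := fun t => pairDiam v 0 + ε + ε * t + ∫ s in (0:ℝ)..t, hfun s with hBf_def
    set F' : ℝ → ℝ := fun s =>
      if pairDiam v s = Bf s then hfun s else 2 * A + hfun s + 1 with hF'_def
    have hB' : ∀ u : ℝ, HasDerivAt Bf (ε + hfun u) u := by
      intro u
      have h1 : HasDerivAt (fun t : ℝ => pairDiam v 0 + ε + ε * t) ε u := by
        simpa using ((hasDerivAt_id u).const_mul ε).const_add (pairDiam v 0 + ε)
      exact h1.add (hfun_cont.integral_hasStrictDerivAt 0 u).hasDerivAt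
    have hBint_nonneg : ∀ t : ℝ, 0 ≤ t → 0 ≤ ∫ s in (0:ℝ)..t, hfun s := by
      intro t ht
      exact intervalIntegral.integral_nonneg ht (fun u _ => hfun_nonneg u)
    have ha : pairDiam v 0 ≤ Bf 0 := by
      simp only [hBf_def, intervalIntegral.integral_same, mul_zero, add_zero]
      linarith
    have hcont : ContinuousOn (fun t => pairDiam v t) (Icc 0 T) :=
      hdv_cont.mono (fun s hs => hs.1)
    have hbound : ∀ s ∈ Ico (0:ℝ) T, pairDiam v s = Bf s → F' s < ε + hfun s := by
      intro s _ h
      simp only [hF'_def, if_pos h]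
      linarith
    have hslope : ∀ t0 ∈ Ico (0:ℝ) T, ∀ r, F' t0 < r →
        ∃ᶠ z in nhdsWithin t0 (Ioi t0), slope (fun t => pairDiam v t) t0 z < r := by
      intro t0 ht0 r hr
      have ht00 : (0:ℝ) ≤ t0 := ht0.1
      have hIoi_sub : Ioi t0 ⊆ Ici (0:ℝ) := fun z hz => le_trans ht00 (le_of_lt hz)
      by_cases htouch : pairDiam v t0 = Bf t0
      · -- the diameter touches the barrier: use convexity of the interaction
        rw [hF'_def] at hr
        simp only [if_pos htouch] at hr
        have hrpos : 0 < r := lt_of_le_of_lt (hfun_nonneg t0) hr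
        have hDpos : 0 < pairDiam v t0 := by
          rw [htouch, hBf_def]
          have h1 := hpd_nonneg v 0
          have h2 : 0 ≤ ε * t0 := mul_nonneg hε.le ht00
          have h3 := hBint_nonneg t0 ht00
          simp only []
          linarith
        have hpair : ∀ p q : Fin N, ∀ᶠ z in nhdsWithin t0 (Ioi t0),
            ‖v p z - v q z‖ - pairDiam v t0 < r * (z - t0) := by
          intro p q
          by_cases hm : ‖v p t0 - v q t0‖ = pairDiam v t0
          · -- maximizing pair
            set g : ℝ → EuclideanSpace ℝ (Fin d) := fun z => v p z - v q z with hg_def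
            have hgd : HasDerivWithinAt g (W p t0 - W q t0) (Ici 0) t0 :=
              (hW p t0 ht00).sub (hW q t0 ht00)
            have hgnorm : ‖g t0‖ = pairDiam v t0 := hm
            have hgnormpos : 0 < ‖g t0‖ := by rw [hgnorm]; exact hDpos
            have hgne : g t0 ≠ 0 := by
              intro h; rw [h] at hgnormpos; simp at hgnormpos
            -- inner product estimates
            have hTp : ⟪g t0, vbarCL φ σ x v p t0 - v p t0⟫ ≤ 0 := by
              rw [hu_rw p t0, inner_sum]
              apply Finset.sum_nonpos
              intro k _
              rw [real_inner_smul_right]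
              apply mul_nonpos_of_nonneg_of_nonpos (hφ_pos p k _ _).le
              have e1 : v k t0 - v p t0 = (v k t0 - v q t0) - (v p t0 - v q t0) := by abel
              rw [e1, inner_sub_right]
              have e2 : ⟪g t0, v k t0 - v q t0⟫ ≤ ‖g t0‖ * ‖v k t0 - v q t0‖ :=
                real_inner_le_norm _ _
              have e3 : ‖v k t0 - v q t0‖ ≤ pairDiam v t0 := hpd_le v t0 k q
              have e4 : ⟪g t0, v p t0 - v q t0⟫ = ‖g t0‖ * ‖g t0‖ :=
                real_inner_self_eq_norm_mul_norm (g t0)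
              have e5 : ‖g t0‖ * ‖v k t0 - v q t0‖ ≤ ‖g t0‖ * pairDiam v t0 :=
                mul_le_mul_of_nonneg_left e3 (norm_nonneg _)
              rw [hgnorm] at e2 e4 e5
              linarith
            have hTq : 0 ≤ ⟪g t0, vbarCL φ σ x v q t0 - v q t0⟫ := by
              rw [hu_rw q t0, inner_sum]
              apply Finset.sum_nonneg
              intro k _
              rw [real_inner_smul_right]
              apply mul_nonneg (hφ_pos q k _ _).le
              have e1 : v k t0 - v q t0 = (v k t0 - v p t0) + (v p t0 - v q t0) := by abel
              rw [e1, inner_add_right]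
              have e2 : -(‖g t0‖ * ‖v k t0 - v p t0‖) ≤ ⟪g t0, v k t0 - v p t0⟫ := by
                have := abs_real_inner_le_norm (g t0) (v k t0 - v p t0)
                have h' := neg_abs_le (⟪g t0, v k t0 - v p t0⟫)
                linarith
              have e3 : ‖v k t0 - v p t0‖ ≤ pairDiam v t0 := hpd_le v t0 k p
              have e4 : ⟪g t0, v p t0 - v q t0⟫ = ‖g t0‖ * ‖g t0‖ :=
                real_inner_self_eq_norm_mul_norm (g t0)
              have e5 : ‖g t0‖ * ‖v k t0 - v p t0‖ ≤ ‖g t0‖ * pairDiam v t0 :=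
                mul_le_mul_of_nonneg_left e3 (norm_nonneg _)
              rw [hgnorm] at e2 e4 e5
              linarith
            have hTβ : ⟪g t0, β p t0 - β q t0⟫ ≤ ‖g t0‖ * hfun t0 := by
              have e1 : ⟪g t0, β p t0 - β q t0⟫ ≤ ‖g t0‖ * ‖β p t0 - β q t0‖ :=
                real_inner_le_norm _ _
              have e2 : ‖β p t0 - β q t0‖ ≤ pairDiam β t0 := hpd_le β t0 p q
              have e3 : pairDiam β t0 = hfun t0 := (hfun_eq t0 ht00).symm
              nlinarith [norm_nonneg (g t0)]
            have hip : ⟪g t0, W p t0 - W q t0⟫ ≤ ‖g t0‖ * hfun t0 := by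
              have hsplit : W p t0 - W q t0 =
                  (alphaCL φ σ ξ x v p t0 • (vbarCL φ σ x v p t0 - v p t0)
                    - alphaCL φ σ ξ x v q t0 • (vbarCL φ σ x v q t0 - v q t0))
                  + (β p t0 - β q t0) := by
                simp only [hW_def]; abel
              rw [hsplit, inner_add_right, inner_sub_right, real_inner_smul_right,
                real_inner_smul_right]
              have hαp : 0 ≤ alphaCL φ σ ξ x v p t0 := (hξ_pos p _).le
              have hαq : 0 ≤ alphaCL φ σ ξ x v q t0 := (hξ_pos q _).le
              have h1 : alphaCL φ σ ξ x v p t0 * ⟪g t0, vbarCL φ σ x v p t0 - v p t0⟫ ≤ 0 :=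
                mul_nonpos_of_nonneg_of_nonpos hαp hTp
              have h2 : 0 ≤ alphaCL φ σ ξ x v q t0 * ⟪g t0, vbarCL φ σ x v q t0 - v q t0⟫ :=
                mul_nonneg hαq hTq
              linarith
            -- derivative of the norm
            have hnd := flockAux_norm_hasDerivWithinAt g (W p t0 - W q t0) (Ici 0) t0 hgd hgne
            have hlt : ⟪g t0, W p t0 - W q t0⟫ / ‖g t0‖ < r := by
              rw [div_lt_iff₀ hgnormpos]
              calc ⟪g t0, W p t0 - W q t0⟫ ≤ ‖g t0‖ * hfun t0 := hip
                _ = hfun t0 * ‖g t0‖ := by ring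
                _ < r * ‖g t0‖ := by exact mul_lt_mul_of_pos_right hr hgnormpos
            have hmono : HasDerivWithinAt (fun z => ‖g z‖)
                (⟪g t0, W p t0 - W q t0⟫ / ‖g t0‖) (Ici t0) t0 :=
              hnd.mono (Ici_subset_Ici.2 ht00)
            have hslopetend :=
              (hasDerivWithinAt_iff_tendsto_slope' (lt_irrefl t0)).1 hmono.Ioi_of_Ici
            have hev := hslopetend.eventually_lt_const hlt
            filter_upwards [hev, self_mem_nhdsWithin] with z hz hz'
            rw [slope_def_field] at hz
            have hzpos : 0 < z - t0 := sub_pos.2 hz'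
            rw [div_lt_iff₀ hzpos] at hz
            have : ‖v p z - v q z‖ = ‖g z‖ := rfl
            rw [this, ← hgnorm]
            linarith
          · -- non-maximizing pair: strict inequality persists
            have hlt : ‖v p t0 - v q t0‖ < pairDiam v t0 :=
              lt_of_le_of_ne (hpd_le v t0 p q) hm
            have hc : ContinuousWithinAt (fun z => ‖v p z - v q z‖) (Ici 0) t0 :=
              (((hvc p).sub (hvc q)).norm) t0 ht00
            have hev : ∀ᶠ z in nhdsWithin t0 (Ici 0), ‖v p z - v q z‖ < pairDiam v t0 :=
              hc.eventually_lt_const hlt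
            have hev' : ∀ᶠ z in nhdsWithin t0 (Ioi t0), ‖v p z - v q z‖ < pairDiam v t0 :=
              hev.filter_mono (nhdsWithin_mono t0 hIoi_sub)
            filter_upwards [hev', self_mem_nhdsWithin] with z hz hz'
            have : 0 < r * (z - t0) := mul_pos hrpos (sub_pos.2 hz')
            linarith
        have hall : ∀ᶠ z in nhdsWithin t0 (Ioi t0), ∀ pr : Fin N × Fin N,
            ‖v pr.1 z - v pr.2 z‖ - pairDiam v t0 < r * (z - t0) :=
          eventually_all.2 fun pr => hpair pr.1 pr.2
        have hevent : ∀ᶠ z in nhdsWithin t0 (Ioi t0),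
            slope (fun t => pairDiam v t) t0 z < r := by
          filter_upwards [hall, self_mem_nhdsWithin] with z hz hz'
          have hzpos : 0 < z - t0 := sub_pos.2 hz'
          rw [slope_def_field, div_lt_iff₀ hzpos]
          have hsup : pairDiam v z < pairDiam v t0 + r * (z - t0) := by
            rw [hpd v z]
            refine (Finset.sup'_lt_iff HU).2 ?_
            intro pr _
            have := hz pr
            linarith
          linarith
        exact hevent.frequently
      · -- away from the barrier: crude Lipschitz bound suffices
        rw [hF'_def] at hr
        simp only [if_neg htouch] at hr
        have hcontAt : ContinuousAt hfun t0 := hfun_cont.continuousAt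
        have hev0 : ∀ᶠ s in nhds t0, hfun s < hfun t0 + 1 :=
          hcontAt.eventually_lt_const (lt_add_one _)
        obtain ⟨δ, hδpos, hδ⟩ := Metric.eventually_nhds_iff.1 hev0
        have hevent : ∀ᶠ z in nhdsWithin t0 (Ioi t0),
            slope (fun t => pairDiam v t) t0 z < r := by
          filter_upwards [Ioo_mem_nhdsGT_of_mem ⟨le_rfl, lt_add_of_pos_right t0 hδpos⟩]
            with z hz
          have hzpos : 0 < z - t0 := sub_pos.2 hz.1
          have hbd : ∀ p q : Fin N,
              ‖(v p z - v q z) - (v p t0 - v q t0)‖ ≤ (2 * A + hfun t0 + 1) * (z - t0) := by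
            intro p q
            have hIcc : Icc t0 z ⊆ Ici (0:ℝ) := fun s hs => le_trans ht00 hs.1
            have hd : ∀ s ∈ Icc t0 z,
                HasDerivWithinAt (fun u => v p u - v q u) (W p s - W q s) (Icc t0 z) s :=
              fun s hs => ((hW p s (hIcc hs)).sub (hW q s (hIcc hs))).mono hIcc
            have hC : ∀ s ∈ Icc t0 z, ‖W p s - W q s‖ ≤ 2 * A + hfun t0 + 1 := by
              intro s hs
              have hs0 : (0:ℝ) ≤ s := hIcc hs
              have h1 : ‖W p s - W q s‖ ≤ 2 * A + pairDiam β s := hWd p q s hs0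
              have h2 : pairDiam β s = hfun s := (hfun_eq s hs0).symm
              have h3 : hfun s < hfun t0 + 1 := by
                apply hδ
                rw [Real.dist_eq, abs_of_nonneg (by linarith [hs.1] : (0:ℝ) ≤ s - t0)]
                have := hs.2
                linarith [hz.2]
              linarith
            have := Convex.norm_image_sub_le_of_norm_hasDerivWithin_le hd hC
              (convex_Icc t0 z) (left_mem_Icc.2 hz.1.le) (right_mem_Icc.2 hz.1.le)
            simpa [Real.norm_eq_abs, abs_of_pos hzpos] using this
          rw [slope_def_field, div_lt_iff₀ hzpos]
          obtain ⟨pr, _, hpr⟩ :=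
            Finset.exists_mem_eq_sup' HU (fun p : Fin N × Fin N => ‖v p.1 z - v p.2 z‖)
          have h1 : pairDiam v z = ‖v pr.1 z - v pr.2 z‖ := by rw [hpd v z]; exact hpr
          have h2 : ‖v pr.1 t0 - v pr.2 t0‖ ≤ pairDiam v t0 := hpd_le v t0 pr.1 pr.2
          have h3 := hbd pr.1 pr.2
          have h4 : ‖v pr.1 z - v pr.2 z‖ - ‖v pr.1 t0 - v pr.2 t0‖
              ≤ (2 * A + hfun t0 + 1) * (z - t0) :=
            le_trans (norm_sub_norm_le _ _) h3
          have h5 : (2 * A + hfun t0 + 1) * (z - t0) < r * (z - t0) :=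
            mul_lt_mul_of_pos_right hr hzpos
          linarith
        exact hevent.frequently
    exact fun t ht =>
      image_le_of_liminf_slope_right_lt_deriv_boundary hcont hslope ha
        (fun u => hB' u) hbound ht
  -- the integral of the β-diameter is uniformly bounded
  set C : ℝ := (∫⁻ t in Ici (0:ℝ), ENNReal.ofReal (pairDiam β t)).toReal with hC_def
  have hCnn : 0 ≤ C := ENNReal.toReal_nonneg
  have hInt_bound : ∀ t : ℝ, 0 ≤ t → ∫ s in (0:ℝ)..t, hfun s ≤ C := by
    intro t ht
    rw [intervalIntegral.integral_of_le ht]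
    have h1 : ∫ s in Ioc (0:ℝ) t, hfun s
        = (∫⁻ s in Ioc (0:ℝ) t, ENNReal.ofReal (hfun s)).toReal :=
      integral_eq_lintegral_of_nonneg_ae (Eventually.of_forall fun s => hfun_nonneg s)
        hfun_cont.aestronglyMeasurable.restrict
    rw [h1, hC_def]
    apply ENNReal.toReal_mono hβ_int.ne
    calc ∫⁻ s in Ioc (0:ℝ) t, ENNReal.ofReal (hfun s)
        = ∫⁻ s in Ioc (0:ℝ) t, ENNReal.ofReal (pairDiam β s) := by
          apply setLIntegral_congr_fun measurableSet_Ioc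
          exact fun s hs => by rw [hfun_eq s hs.1.le]
      _ ≤ ∫⁻ s in Ici (0:ℝ), ENNReal.ofReal (pairDiam β s) :=
          lintegral_mono_set (fun u hu => le_of_lt hu.1)
  -- uniform bound on the velocity diameter
  have hDbound : ∀ t : ℝ, 0 ≤ t → pairDiam v t ≤ pairDiam v 0 + C := by
    intro t ht
    apply le_of_forall_pos_le_add
    intro ε' hε'
    have hden : (0:ℝ) < 1 + t := by linarith
    have hεpos : 0 < ε' / (1 + t) := div_pos hε' hden
    have h := key t ht (ε' / (1 + t)) hεpos t ⟨ht, le_rfl⟩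
    have hint := hInt_bound t ht
    have harith : ε' / (1 + t) + ε' / (1 + t) * t = ε' := by
      field_simp
    linarith
  set R : ℝ := pairDiam v 0 + C with hR_def
  have hR0 : 0 ≤ R := by
    have := hpd_nonneg v 0
    simp only [hR_def]
    linarith
  -- uniform bound on the deviation v̄_i - v_i
  have hu_bound : ∀ (i : Fin N) (t : ℝ), 0 ≤ t →
      ‖vbarCL φ σ x v i t - v i t‖ ≤ R := by
    intro i t ht
    rw [hu_rw i t]
    have h1 : ‖∑ k, aCL φ σ x v i k t • (v k t - v i t)‖
        ≤ ∑ k, aCL φ σ x v i k t * ‖v k t - v i t‖ := by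
      refine (norm_sum_le _ _).trans (le_of_eq ?_)
      apply Finset.sum_congr rfl
      intro k _
      rw [norm_smul, Real.norm_eq_abs, abs_of_pos]
      exact hφ_pos i k _ _
    have h2 : ∑ k, aCL φ σ x v i k t * ‖v k t - v i t‖
        ≤ ∑ k, aCL φ σ x v i k t * pairDiam v t := by
      apply Finset.sum_le_sum
      intro k _
      exact mul_le_mul_of_nonneg_left (hpd_le v t k i) (hφ_pos i k _ _).le
    have h3 : ∑ k, aCL φ σ x v i k t * pairDiam v t = pairDiam v t := by
      rw [← Finset.sum_mul, hsum1, one_mul]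
    have h4 := hDbound t ht
    linarith
  -- conclude by compactness
  have hmin : ∀ i : Fin N, ∃ m : ℝ, 0 < m ∧
      ∀ y ∈ Metric.closedBall (0 : EuclideanSpace ℝ (Fin d)) R, m ≤ ξ i y := by
    intro i
    obtain ⟨z, _, hzmin⟩ :=
      (isCompact_closedBall (0 : EuclideanSpace ℝ (Fin d)) R).exists_isMinOn
        ⟨0, Metric.mem_closedBall_self hR0⟩ ((hξ_smooth i).continuous.continuousOn)
    exact ⟨ξ i z, hξ_pos i z, fun y hy => hzmin hy⟩
  choose m hm0 hmle using hmin
  have hm0pos : 0 < Finset.univ.inf' Finset.univ_nonempty m :=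
    (Finset.lt_inf'_iff _).2 fun i _ => hm0 i
  haveI : Nonempty (Ici (0:ℝ)) := ⟨⟨0, Set.self_mem_Ici⟩⟩
  refine lt_of_lt_of_le hm0pos (le_ciInf ?_)
  rintro ⟨i, t, ht⟩
  have hball : vbarCL φ σ x v i t - v i t
      ∈ Metric.closedBall (0 : EuclideanSpace ℝ (Fin d)) R := by
    rw [Metric.mem_closedBall, dist_zero_right]
    exact hu_bound i t ht
  calc Finset.univ.inf' Finset.univ_nonempty m ≤ m i := Finset.inf'_le _ (Finset.mem_univ i)
    _ ≤ ξ i (vbarCL φ σ x v i t - v i t) := hmle i _ hball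
    _ = alphaCL φ σ ξ x v i t := rfl
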